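/- Let ξ, η be finite nonincreasing sequences of nonnegative reals of length N with ξ majorized at infinity by η, i.e., ∑_{j=n}^N ξ_j ≤ ∑_{j=n}^N η_j for all 1 ≤ n ≤ N. Then there exists a nonincreasing nonnegative sequence ζ of length N with ξ ≼_∞ ζ (i.e., ξ ≺_∞ ζ and ∑_{j=1}^N ξ_j = ∑_{j=1}^N ζ_j) and ζ_j ≤ η_j for all j. -/

import Mathlib

open Finset

theorem stmt11 (N : ℕ) (ξ η : Fin N → ℝ)
    (hξa : Antitone ξ) (hξ0 : ∀ j, 0 ≤ ξ j)
    (hηa : Antitone η) (hη0 : ∀ j, 0 ≤ η j)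
    (hmaj : ∀ n : Fin N, ∑ j ∈ Finset.Ici n, ξ j ≤ ∑ j ∈ Finset.Ici n, η j) :
    ∃ ζ : Fin N → ℝ, Antitone ζ ∧ (∀ j, 0 ≤ ζ j) ∧
      (∀ n : Fin N, ∑ j ∈ Finset.Ici n, ξ j ≤ ∑ j ∈ Finset.Ici n, ζ j) ∧
      (∑ j, ξ j) = (∑ j, ζ j) ∧
      (∀ j, ζ j ≤ η j) := by
  rcases Nat.eq_zero_or_pos N with hN | hN
  · subst hN
    exact ⟨ξ, hξa, hξ0, fun n => le_refl _, rfl, fun j => j.elim0⟩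
  obtain ⟨M, rfl⟩ : ∃ M, N = M + 1 := ⟨N - 1, by omega⟩
  set i0 : Fin (M + 1) := ⟨0, by omega⟩ with hi0
  have hIci0 : Finset.Ici i0 = Finset.univ := by
    apply Finset.eq_univ_iff_forall.2
    intro j
    simp only [Finset.mem_Ici]
    exact Fin.mk_le_of_le_val (Nat.zero_le _)
  -- the capping function
  set F : ℝ → ℝ := fun t => ∑ j, min (η j) t with hF
  have hFcont : Continuous F := by
    apply continuous_finset_sum
    intro j _
    exact continuous_const.min continuous_id
  have hF0 : F 0 = 0 := by
    simp only [hF]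
    exact Finset.sum_eq_zero fun j _ => min_eq_right (hη0 j)
  have hFtop : F (η i0) = ∑ j, η j := by
    apply Finset.sum_congr rfl
    intro j _
    exact min_eq_left (hηa (Fin.mk_le_of_le_val (Nat.zero_le _)))
  have hT0 : 0 ≤ ∑ j, ξ j := Finset.sum_nonneg fun j _ => hξ0 j
  have hTS : ∑ j, ξ j ≤ ∑ j, η j := by
    have := hmaj i0
    rwa [hIci0] at this
  obtain ⟨t, ht, htF⟩ : ∃ t ∈ Set.Icc (0:ℝ) (η i0), F t = ∑ j, ξ j := by
    have := intermediate_value_Icc (hη0 i0) hFcont.continuousOn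
    have hmem : (∑ j, ξ j) ∈ Set.Icc (F 0) (F (η i0)) := by
      rw [hF0, hFtop]; exact ⟨hT0, hTS⟩
    obtain ⟨t, ht, htF⟩ := this hmem
    exact ⟨t, ht, htF⟩
  refine ⟨fun j => min (η j) t, ?_, ?_, ?_, ?_, ?_⟩
  · exact fun a b h => min_le_min (hηa h) le_rfl
  · exact fun j => le_min (hη0 j) ht.1
  · -- the tail inequalities
    have htotal : ∑ j, ξ j = ∑ j, min (η j) t := htF.symm
    -- the "head" argument, valid whenever t < ξ n
    have headcase : ∀ n : Fin (M+1), t < ξ n →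
        ∑ j ∈ Finset.Ici n, ξ j ≤ ∑ j ∈ Finset.Ici n, min (η j) t := by
      intro n hn
      have h1 : ∑ j ∈ (Finset.Ici n)ᶜ, min (η j) t ≤ ∑ j ∈ (Finset.Ici n)ᶜ, ξ j := by
        apply Finset.sum_le_sum
        intro j hj
        simp only [Finset.mem_compl, Finset.mem_Ici, not_le] at hj
        exact (min_le_right _ _).trans (hn.le.trans (hξa hj.le))
      have h2 := Finset.sum_compl_add_sum (Finset.Ici n) ξ
      have h3 := Finset.sum_compl_add_sum (Finset.Ici n) (fun j => min (η j) t)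
      linarith
    intro n
    induction n using Fin.reverseInduction with
    | last =>
      rcases lt_or_ge t (ξ (Fin.last M)) with h | h
      · exact headcase _ h
      · have hIlast : Finset.Ici (Fin.last M) = {Fin.last M} := by
          ext j
          simp [Fin.last_le_iff, eq_comm]
        rw [hIlast, Finset.sum_singleton, Finset.sum_singleton]
        have hη' : ξ (Fin.last M) ≤ η (Fin.last M) := by
          have := hmaj (Fin.last M)
          rwa [hIlast, Finset.sum_singleton, Finset.sum_singleton] at this
        exact le_min hη' h
    | cast i ih =>
      rcases lt_or_ge t (ξ i.castSucc) with h | h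
      · exact headcase _ h
      rcases le_or_gt (η i.castSucc) t with h2 | h2
      · -- on Ici n, min (η j) t = η j
        refine (hmaj i.castSucc).trans (le_of_eq ?_)
        apply Finset.sum_congr rfl
        intro j hj
        rw [Finset.mem_Ici] at hj
        exact (min_eq_left ((hηa hj).trans h2)).symm
      · -- split off the first term and use the inductive hypothesis
        have hins : Finset.Ici i.castSucc = insert i.castSucc (Finset.Ici i.succ) := by
          ext j
          simp only [Finset.mem_Ici, Finset.mem_insert]
          constructor
          · intro hj
            rcases eq_or_lt_of_le hj with h' | h'
            · exact Or.inl h'.symm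
            · right
              rw [Fin.le_def] at *
              rw [Fin.lt_def] at h'
              simp only [Fin.coe_castSucc, Fin.val_succ] at *
              omega
          · rintro (rfl | hj)
            · exact le_rfl
            · exact (i.castSucc_lt_succ.le).trans hj
        have hnotmem : i.castSucc ∉ Finset.Ici i.succ := by
          simp only [Finset.mem_Ici, not_le]
          exact i.castSucc_lt_succ
        rw [hins, Finset.sum_insert hnotmem, Finset.sum_insert hnotmem]
        have hζn : ξ i.castSucc ≤ min (η i.castSucc) t := le_min (h.trans h2.le) h
        exact add_le_add hζn ih
  · exact htF.symm
  · exact fun j => min_le_left _ _
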